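/- First derivative of the squared Carnot–Carathéodory distance in the Reeb direction (the identity T r² = φ in the proof of Proposition 6.4): let c > 0 and let φ : (0,∞) → (0,π) satisfy χ(φ(t))·c = t for every t > 0. Define s : (0,∞) → ℝ by s(t) = c·φ(t)²/(sin φ(t))². Then s is differentiable and for every t > 0, s'(t) = φ(t). -/

import Mathlib

open Real Filter Topology

/-- The profile function `χ(φ) = φ/(sin φ)² − cot φ` appearing in the explicit formula
for the Carnot–Carathéodory distance to the origin on the Heisenberg group.
(Note: with Lean's convention `x / 0 = 0`, this formula also gives `χ(0) = 0`.) -/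
noncomputable def chi (φ : ℝ) : ℝ := φ / Real.sin φ ^ 2 - Real.cos φ / Real.sin φ

noncomputable def chiD (x : ℝ) : ℝ := 2 * (Real.sin x - x * Real.cos x) / Real.sin x ^ 3

lemma hasDerivAt_chi {x : ℝ} (hx : Real.sin x ≠ 0) : HasDerivAt chi (chiD x) x := by
  have h1 : HasDerivAt (fun y : ℝ => y / Real.sin y ^ 2)
      ((1 * Real.sin x ^ 2 - x * (2 * Real.sin x ^ 1 * Real.cos x)) / (Real.sin x ^ 2) ^ 2) x :=
    (hasDerivAt_id x).div ((Real.hasDerivAt_sin x).pow 2) (pow_ne_zero _ hx)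
  have h2 : HasDerivAt (fun y : ℝ => Real.cos y / Real.sin y)
      ((-Real.sin x * Real.sin x - Real.cos x * Real.cos x) / Real.sin x ^ 2) x :=
    (Real.hasDerivAt_cos x).div (Real.hasDerivAt_sin x) hx
  have := h1.sub h2
  refine HasDerivAt.congr_deriv this (Eq.symm ?_)
  have hpy := Real.sin_sq_add_cos_sq x
  unfold chiD
  field_simp
  linear_combination (-Real.sin x) * hpy

lemma sin_sub_mul_cos_pos {x : ℝ} (hx : x ∈ Set.Ioo 0 π) :
    0 < Real.sin x - x * Real.cos x := by
  obtain ⟨h0, hπ⟩ := hx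
  have hs : 0 < Real.sin x := Real.sin_pos_of_pos_of_lt_pi h0 hπ
  rcases le_or_gt (Real.cos x) 0 with hcos | hcos
  · nlinarith [mul_nonpos_of_nonneg_of_nonpos h0.le hcos]
  · have hlt : x < π / 2 := by
      by_contra h
      exact absurd (Real.cos_nonpos_of_pi_div_two_le_of_le (le_of_not_gt h)
        (by linarith [Real.pi_pos])) (not_le.2 hcos)
    have := Real.lt_tan h0 hlt
    rw [Real.tan_eq_sin_div_cos] at this
    have := (lt_div_iff₀ hcos).1 this
    linarith

lemma chiD_pos {x : ℝ} (hx : x ∈ Set.Ioo 0 π) : 0 < chiD x := by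
  have hs : 0 < Real.sin x := Real.sin_pos_of_pos_of_lt_pi hx.1 hx.2
  have := sin_sub_mul_cos_pos hx
  unfold chiD
  positivity

lemma chi_pos {x : ℝ} (hx : x ∈ Set.Ioo 0 π) : 0 < chi x := by
  have hs : 0 < Real.sin x := Real.sin_pos_of_pos_of_lt_pi hx.1 hx.2
  have hnum : 0 < x - Real.sin x * Real.cos x := by
    have h2 : Real.sin (2 * x) < 2 * x := Real.sin_lt (by linarith [hx.1])
    rw [Real.sin_two_mul] at h2
    linarith
  have : chi x = (x - Real.sin x * Real.cos x) / Real.sin x ^ 2 := by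
    unfold chi; field_simp
  rw [this]; positivity

lemma chi_strictMonoOn : StrictMonoOn chi (Set.Ioo 0 π) := by
  apply StrictMonoOn.mono (s := Set.Ioo 0 π) ?_ le_rfl
  have : ∀ x ∈ Set.Ioo 0 π, HasDerivAt chi (chiD x) x := fun x hx =>
    hasDerivAt_chi (Real.sin_pos_of_pos_of_lt_pi hx.1 hx.2).ne'
  apply strictMonoOn_of_deriv_pos (convex_Ioo 0 π)
  · exact fun x hx => (this x hx).continuousAt.continuousWithinAt
  · intro x hx
    rw [interior_Ioo] at hx
    rw [(this x hx).deriv]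
    exact chiD_pos hx

/-- the identity `T r² = φ` in the proof of Proposition 6.4: if
`χ(φ(t))·c = t` for all `t > 0` with `φ(t) ∈ (0, π)`, then the squared distance
`s(t) = c·φ(t)²/(sin φ(t))²` is differentiable with `s'(t) = φ(t)`. -/
theorem sq_dist_reeb_deriv (c : ℝ) (hc : 0 < c) (φ : ℝ → ℝ)
    (hφ : ∀ t : ℝ, 0 < t → φ t ∈ Set.Ioo 0 π ∧ chi (φ t) * c = t) :
    ∀ t : ℝ, 0 < t →
      HasDerivAt (fun t => c * φ t ^ 2 / Real.sin (φ t) ^ 2) (φ t) t := by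
  intro t ht
  obtain ⟨hmem, heq⟩ := hφ t ht
  have hsin : 0 < Real.sin (φ t) := Real.sin_pos_of_pos_of_lt_pi hmem.1 hmem.2
  -- continuity of φ at t
  have hcont : ContinuousAt φ t := by
    rw [ContinuousAt, tendsto_order]
    constructor
    · intro a ha
      set a' : ℝ := max a (φ t / 2) with ha'
      have ha'lt : a' < φ t := max_lt ha (by linarith [hmem.1])
      have ha'mem : a' ∈ Set.Ioo 0 π := ⟨lt_of_lt_of_le (by linarith [hmem.1]) (le_max_right _ _),
        lt_trans ha'lt hmem.2⟩
      have hlt : chi a' * c < t := by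
        rw [← heq]
        exact mul_lt_mul_of_pos_right (chi_strictMonoOn ha'mem hmem ha'lt) hc
      have hpos : 0 < chi a' * c := mul_pos (chi_pos ha'mem) hc
      filter_upwards [Ioi_mem_nhds hlt] with t' ht'
      have ht'pos : 0 < t' := lt_trans hpos ht'
      obtain ⟨hm', he'⟩ := hφ t' ht'pos
      have : a' < φ t' := by
        by_contra h
        have hle := mul_le_mul_of_nonneg_right
          (chi_strictMonoOn.monotoneOn hm' ha'mem (le_of_not_gt h)) hc.le
        rw [he'] at hle
        exact absurd (Set.mem_Ioi.1 ht') (not_lt.2 hle)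
      exact lt_of_le_of_lt (le_max_left _ _) this
    · intro b hb
      set b' : ℝ := min b ((φ t + π) / 2) with hb'
      have hb'gt : φ t < b' := lt_min hb (by linarith [hmem.2])
      have hb'mem : b' ∈ Set.Ioo 0 π := ⟨lt_trans hmem.1 hb'gt,
        lt_of_le_of_lt (min_le_right _ _) (by linarith [hmem.2])⟩
      have hlt : t < chi b' * c := by
        rw [← heq]
        exact mul_lt_mul_of_pos_right (chi_strictMonoOn hmem hb'mem hb'gt) hc
      filter_upwards [Iio_mem_nhds hlt, Ioi_mem_nhds ht] with t' ht' ht'pos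
      obtain ⟨hm', he'⟩ := hφ t' ht'pos
      have : φ t' < b' := by
        by_contra h
        have hle := mul_le_mul_of_nonneg_right
          (chi_strictMonoOn.monotoneOn hb'mem hm' (le_of_not_gt h)) hc.le
        rw [he'] at hle
        exact absurd (Set.mem_Iio.1 ht') (not_lt.2 hle)
      exact lt_of_lt_of_le this (min_le_left _ _)
  -- derivative of φ via inverse function
  have hf : HasDerivAt (fun x => chi x * c) (chiD (φ t) * c) (φ t) :=
    (hasDerivAt_chi hsin.ne').mul_const c
  have hne : chiD (φ t) * c ≠ 0 := (mul_pos (chiD_pos hmem) hc).ne'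
  have hev : ∀ᶠ y in 𝓝 t, chi (φ y) * c = y := by
    filter_upwards [Ioi_mem_nhds ht] with y hy
    exact (hφ y hy).2
  have hφ' : HasDerivAt φ (chiD (φ t) * c)⁻¹ t :=
    HasDerivAt.of_local_left_inverse hcont hf hne hev
  -- outer function
  have houter : HasDerivAt (fun x => c * x ^ 2 / Real.sin x ^ 2)
      ((c * (2 * (φ t) ^ 1 * 1) * Real.sin (φ t) ^ 2 -
        c * (φ t) ^ 2 * (2 * Real.sin (φ t) ^ 1 * Real.cos (φ t))) /
        (Real.sin (φ t) ^ 2) ^ 2) (φ t) :=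
    (((hasDerivAt_id (φ t)).pow 2).const_mul c).div
      ((Real.hasDerivAt_sin (φ t)).pow 2) (pow_ne_zero _ hsin.ne')
  have := houter.comp t hφ'
  refine HasDerivAt.congr_deriv this (Eq.symm ?_)
  rw [eq_comm, mul_inv_eq_iff_eq_mul₀ hne]
  unfold chiD
  field_simp
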